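/- A_BKKS is not determinisable by pruning: there is no deterministic Büchi automaton B obtained from A_BKKS by removing transitions (that is, with the same states and initial state as A_BKKS, transition set Δ' ⊆ Δ, and significant transitions F ∩ Δ') such that L(B) = L(A_BKKS). -/
import Mathlib


/-- A (nondeterministic) Büchi/coBüchi automaton: an initial state, a set of
transitions, and a subset of *significant* transitions. -/
structure BuchiAutomaton (σ : Type) (Q : Type) where
  init : Q
  trans : Set (Q × σ × Q)
  sig : Set (Q × σ × Q)
  sig_sub : sig ⊆ trans

namespace BuchiAutomaton

variable {σ Q : Type}

/-- `ρ` is a run of `A` on the infinite word `w`, starting at the state `p`. -/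
def IsRunFrom (A : BuchiAutomaton σ Q) (p : Q) (w : ℕ → σ) (ρ : ℕ → Q) : Prop :=
  ρ 0 = p ∧ ∀ i, (ρ i, w i, ρ (i + 1)) ∈ A.trans

/-- Büchi acceptance: the run contains infinitely many significant transitions. -/
def BuchiAcc (A : BuchiAutomaton σ Q) (w : ℕ → σ) (ρ : ℕ → Q) : Prop :=
  ∀ N, ∃ i, N ≤ i ∧ (ρ i, w i, ρ (i + 1)) ∈ A.sig

/-- coBüchi acceptance: the run contains finitely many significant transitions. -/
def CoBuchiAcc (A : BuchiAutomaton σ Q) (w : ℕ → σ) (ρ : ℕ → Q) : Prop :=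
  ∃ N, ∀ i, N ≤ i → (ρ i, w i, ρ (i + 1)) ∉ A.sig

/-- The language of `A` (as a Büchi automaton), with initial state `p`. -/
def LangFrom (A : BuchiAutomaton σ Q) (p : Q) : Set (ℕ → σ) :=
  {w | ∃ ρ, A.IsRunFrom p w ρ ∧ A.BuchiAcc w ρ}

/-- The language of `A`, read as a Büchi automaton. -/
def Lang (A : BuchiAutomaton σ Q) : Set (ℕ → σ) :=
  A.LangFrom A.init

/-- The language of `A`, read as a coBüchi automaton. -/
def CoLang (A : BuchiAutomaton σ Q) : Set (ℕ → σ) :=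
  {w | ∃ ρ, A.IsRunFrom A.init w ρ ∧ A.CoBuchiAcc w ρ}

/-- `A` is deterministic: at most one outgoing transition per state and letter. -/
def Deterministic (A : BuchiAutomaton σ Q) : Prop :=
  ∀ p a q q', (p, a, q) ∈ A.trans → (p, a, q') ∈ A.trans → q = q'

/-- `FinRun A l p`: `l` is a finite run of `A` from the initial state, ending in
the state `p` (represented as the chronological list of its transitions). -/
inductive FinRun (A : BuchiAutomaton σ Q) : List (Q × σ × Q) → Q → Prop
  | nil : FinRun A [] A.init
  | snoc {l : List (Q × σ × Q)} {p : Q} {a : σ} {q : Q} :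
      FinRun A l p → (p, a, q) ∈ A.trans → FinRun A (l ++ [(p, a, q)]) q

/-- A resolver for `A`: a function from finite runs and letters to transitions,
such that on every finite run from the initial state ending in a state `p` and
every letter `a`, it outputs a transition on `a` with source `p`. -/
structure Resolver (A : BuchiAutomaton σ Q) where
  res : List (Q × σ × Q) → σ → Q × σ × Q
  res_valid : ∀ l p a, A.FinRun l p →
    (res l a).1 = p ∧ (res l a).2.1 = a ∧ res l a ∈ A.trans

/-- The history (finite run) built by a resolver after reading `n` letters of `w`. -/
def Resolver.hist {A : BuchiAutomaton σ Q} (r : Resolver A) (w : ℕ → σ) : ℕ → List (Q × σ × Q)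
  | 0 => []
  | n + 1 => r.hist w n ++ [r.res (r.hist w n) (w n)]

/-- The run induced by the resolver on `w` satisfies the Büchi condition. -/
def Resolver.InducedBuchiAcc {A : BuchiAutomaton σ Q} (r : Resolver A) (w : ℕ → σ) : Prop :=
  ∀ N, ∃ n, N ≤ n ∧ r.res (r.hist w n) (w n) ∈ A.sig

/-- The run induced by the resolver on `w` satisfies the coBüchi condition. -/
def Resolver.InducedCoBuchiAcc {A : BuchiAutomaton σ Q} (r : Resolver A) (w : ℕ → σ) : Prop :=
  ∃ N, ∀ n, N ≤ n → r.res (r.hist w n) (w n) ∉ A.sig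

/-- `A` is history-deterministic (as a Büchi automaton). -/
def HistoryDeterministic (A : BuchiAutomaton σ Q) : Prop :=
  ∃ r : Resolver A, ∀ w ∈ A.Lang, r.InducedBuchiAcc w

/-- `A` is history-deterministic (as a coBüchi automaton). -/
def CoHistoryDeterministic (A : BuchiAutomaton σ Q) : Prop :=
  ∃ r : Resolver A, ∀ w ∈ A.CoLang, r.InducedCoBuchiAcc w

end BuchiAutomaton

/-- The alphabet `{x, a, b}`. -/
inductive XAB : Type
  | x | a | b
deriving DecidableEq

/-- The states of the automaton `A_BKKS`. -/
inductive BSt : Type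
  | I | ia | ib | pa | pb | pa' | pb'
deriving DecidableEq

open XAB BSt in
/-- The Büchi automaton `A_BKKS`. -/
def Abkks : BuchiAutomaton XAB BSt where
  init := I
  trans := ({(ia, a, pa), (ib, b, pb), (pa', a, I), (pb', b, I)} : Set (BSt × XAB × BSt)) ∪
    ({(I, x, ia), (I, x, ib), (ia, b, I), (ib, a, I),
      (pa, x, pa'), (pb, x, pb'), (pa', b, pb), (pb', a, pa)} : Set (BSt × XAB × BSt))
  sig := {(ia, a, pa), (ib, b, pb), (pa', a, I), (pb', b, I)}
  sig_sub := Set.subset_union_left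

open XAB in
/-- `L_BKKS`: the infinite words of the form `(xa + xb)^ω` containing
infinitely many occurrences of the infix `xaxa` or infinitely many occurrences
of the infix `xbxb`. -/
def L_BKKS : Set (ℕ → XAB) :=
  {w | (∀ n, w (2 * n) = x ∧ (w (2 * n + 1) = a ∨ w (2 * n + 1) = b)) ∧
    ((∀ N, ∃ i, N ≤ i ∧ w i = x ∧ w (i + 1) = a ∧ w (i + 2) = x ∧ w (i + 3) = a) ∨
     (∀ N, ∃ i, N ≤ i ∧ w i = x ∧ w (i + 1) = b ∧ w (i + 2) = x ∧ w (i + 3) = b))}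

open XAB BSt

/-- The word `(xa)^ω`. -/
def wxa : ℕ → XAB := fun n => if n % 2 = 0 then x else a

/-- The word `(xb)^ω`. -/
def wxb : ℕ → XAB := fun n => if n % 2 = 0 then x else b

def rhoa : ℕ → BSt := fun n =>
  match n % 4 with
  | 0 => I | 1 => ia | 2 => pa | _ => pa'

def rhob : ℕ → BSt := fun n =>
  match n % 4 with
  | 0 => I | 1 => ib | 2 => pb | _ => pb'

lemma wxa_mem : wxa ∈ Abkks.Lang := by
  refine ⟨rhoa, ⟨rfl, ?_⟩, ?_⟩
  · intro i
    have h4 : i % 4 = 0 ∨ i % 4 = 1 ∨ i % 4 = 2 ∨ i % 4 = 3 := by omega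
    rcases h4 with h | h | h | h <;>
    · have h1 : (i + 1) % 4 = (i % 4 + 1) % 4 := by omega
      have h2 : i % 2 = i % 4 % 2 := by omega
      simp [rhoa, wxa, h, h1, h2, Abkks]
  · intro N
    refine ⟨4 * N + 1, by omega, ?_⟩
    have h : (4 * N + 1) % 4 = 1 := by omega
    have h1 : (4 * N + 2) % 4 = 2 := by omega
    have h2 : (4 * N + 1) % 2 = 1 := by omega
    simp [rhoa, wxa, h, h1, h2, Abkks]

lemma wxb_mem : wxb ∈ Abkks.Lang := by
  refine ⟨rhob, ⟨rfl, ?_⟩, ?_⟩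
  · intro i
    have h4 : i % 4 = 0 ∨ i % 4 = 1 ∨ i % 4 = 2 ∨ i % 4 = 3 := by omega
    rcases h4 with h | h | h | h <;>
    · have h1 : (i + 1) % 4 = (i % 4 + 1) % 4 := by omega
      have h2 : i % 2 = i % 4 % 2 := by omega
      simp [rhob, wxb, h, h1, h2, Abkks]
  · intro N
    refine ⟨4 * N + 1, by omega, ?_⟩
    have h : (4 * N + 1) % 4 = 1 := by omega
    have h1 : (4 * N + 2) % 4 = 2 := by omega
    have h2 : (4 * N + 1) % 2 = 1 := by omega
    simp [rhob, wxb, h, h1, h2, Abkks]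

lemma not_acc_a {Δ' : Set (BSt × XAB × BSt)} (hsub : Δ' ⊆ Abkks.trans)
    (hia : (I, x, ia) ∉ Δ') {ρ : ℕ → BSt}
    (hrun : (BuchiAutomaton.mk Abkks.init Δ' (Abkks.sig ∩ Δ') Set.inter_subset_right).IsRunFrom
      Abkks.init wxa ρ) :
    ¬ (BuchiAutomaton.mk Abkks.init Δ' (Abkks.sig ∩ Δ')
        Set.inter_subset_right).BuchiAcc wxa ρ := by
  obtain ⟨h0, hstep⟩ := hrun
  replace h0 : ρ 0 = BSt.I := h0
  have key : ∀ n, ρ (2 * n) = I ∧ ρ (2 * n + 1) = ib := by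
    intro n
    induction n with
    | zero =>
      constructor
      · exact h0
      · have h := hsub (hstep 0)
        have hx : wxa 0 = x := by simp [wxa]
        rw [h0, hx] at h
        have hne : ρ 1 ≠ ia := by
          intro he; exact hia (by rw [← h0, ← hx, ← he]; exact hstep 0)
        simp only [Abkks, Set.mem_union, Set.mem_insert_iff, Set.mem_singleton_iff,
          Prod.mk.injEq] at h
        rcases h with (⟨h1,h2,h3⟩|⟨h1,h2,h3⟩|⟨h1,h2,h3⟩|⟨h1,h2,h3⟩) |
          (⟨h1,h2,h3⟩|⟨h1,h2,h3⟩|⟨h1,h2,h3⟩|⟨h1,h2,h3⟩|⟨h1,h2,h3⟩|⟨h1,h2,h3⟩|⟨h1,h2,h3⟩|⟨h1,h2,h3⟩) <;>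
          first | exact h3 | exact absurd h3 hne | simp_all
    | succ n ih =>
      obtain ⟨hI, hib⟩ := ih
      have heven : ρ (2 * (n + 1)) = I := by
        have h := hsub (hstep (2 * n + 1))
        have hx : wxa (2 * n + 1) = a := by simp [wxa, Nat.add_mod]
        rw [hib, hx, show 2 * n + 1 + 1 = 2 * (n + 1) by ring] at h
        simp only [Abkks, Set.mem_union, Set.mem_insert_iff, Set.mem_singleton_iff,
          Prod.mk.injEq] at h
        rcases h with (⟨h1,h2,h3⟩|⟨h1,h2,h3⟩|⟨h1,h2,h3⟩|⟨h1,h2,h3⟩) |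
          (⟨h1,h2,h3⟩|⟨h1,h2,h3⟩|⟨h1,h2,h3⟩|⟨h1,h2,h3⟩|⟨h1,h2,h3⟩|⟨h1,h2,h3⟩|⟨h1,h2,h3⟩|⟨h1,h2,h3⟩) <;>
          first | exact h3 | exact absurd h3 hne | simp_all
      refine ⟨heven, ?_⟩
      have h := hsub (hstep (2 * (n + 1)))
      have hx : wxa (2 * (n + 1)) = x := by simp [wxa, Nat.mul_mod_right]
      rw [heven, hx] at h
      have hne : ρ (2 * (n + 1) + 1) ≠ ia := by
        intro he
        exact hia (by rw [← heven, ← hx, ← he]; exact hstep (2 * (n + 1)))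
      simp only [Abkks, Set.mem_union, Set.mem_insert_iff, Set.mem_singleton_iff,
        Prod.mk.injEq] at h
      rcases h with (⟨h1,h2,h3⟩|⟨h1,h2,h3⟩|⟨h1,h2,h3⟩|⟨h1,h2,h3⟩) |
          (⟨h1,h2,h3⟩|⟨h1,h2,h3⟩|⟨h1,h2,h3⟩|⟨h1,h2,h3⟩|⟨h1,h2,h3⟩|⟨h1,h2,h3⟩|⟨h1,h2,h3⟩|⟨h1,h2,h3⟩) <;>
          first | exact h3 | exact absurd h3 hne | simp_all
  intro hacc
  obtain ⟨i, _, hsig⟩ := hacc 0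
  have hsig' : (ρ i, wxa i, ρ (i + 1)) ∈ Abkks.sig := hsig.1
  have hpar : i % 2 = 0 ∨ i % 2 = 1 := by omega
  rcases hpar with hp | hp
  · obtain ⟨k, hk⟩ : ∃ k, i = 2 * k := ⟨i / 2, by omega⟩
    have hI : ρ i = I := by rw [hk]; exact (key k).1
    rw [hI] at hsig'
    simp only [Abkks, Set.mem_insert_iff, Set.mem_singleton_iff, Prod.mk.injEq] at hsig'
    rcases hsig' with ⟨h1,_⟩|⟨h1,_⟩|⟨h1,_⟩|⟨h1,_⟩ <;> simp_all
  · obtain ⟨k, hk⟩ : ∃ k, i = 2 * k + 1 := ⟨i / 2, by omega⟩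
    have hib : ρ i = ib := by rw [hk]; exact (key k).2
    have hx : wxa i = a := by simp [wxa, hk, Nat.add_mod]
    rw [hib, hx] at hsig'
    simp only [Abkks, Set.mem_insert_iff, Set.mem_singleton_iff, Prod.mk.injEq] at hsig'
    rcases hsig' with ⟨h1,h2,_⟩|⟨h1,h2,_⟩|⟨h1,h2,_⟩|⟨h1,h2,_⟩ <;>
      simp_all

lemma not_acc_b {Δ' : Set (BSt × XAB × BSt)} (hsub : Δ' ⊆ Abkks.trans)
    (hib : (I, x, ib) ∉ Δ') {ρ : ℕ → BSt}
    (hrun : (BuchiAutomaton.mk Abkks.init Δ' (Abkks.sig ∩ Δ') Set.inter_subset_right).IsRunFrom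
      Abkks.init wxb ρ) :
    ¬ (BuchiAutomaton.mk Abkks.init Δ' (Abkks.sig ∩ Δ')
        Set.inter_subset_right).BuchiAcc wxb ρ := by
  obtain ⟨h0, hstep⟩ := hrun
  replace h0 : ρ 0 = BSt.I := h0
  have key : ∀ n, ρ (2 * n) = I ∧ ρ (2 * n + 1) = ia := by
    intro n
    induction n with
    | zero =>
      constructor
      · exact h0
      · have h := hsub (hstep 0)
        have hx : wxb 0 = x := by simp [wxb]
        rw [h0, hx] at h
        have hne : ρ 1 ≠ ib := by
          intro he; exact hib (by rw [← h0, ← hx, ← he]; exact hstep 0)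
        simp only [Abkks, Set.mem_union, Set.mem_insert_iff, Set.mem_singleton_iff,
          Prod.mk.injEq] at h
        rcases h with (⟨h1,h2,h3⟩|⟨h1,h2,h3⟩|⟨h1,h2,h3⟩|⟨h1,h2,h3⟩) |
          (⟨h1,h2,h3⟩|⟨h1,h2,h3⟩|⟨h1,h2,h3⟩|⟨h1,h2,h3⟩|⟨h1,h2,h3⟩|⟨h1,h2,h3⟩|⟨h1,h2,h3⟩|⟨h1,h2,h3⟩) <;>
          first | exact h3 | exact absurd h3 hne | simp_all
    | succ n ih =>
      obtain ⟨hI, hiaeq⟩ := ih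
      have heven : ρ (2 * (n + 1)) = I := by
        have h := hsub (hstep (2 * n + 1))
        have hx : wxb (2 * n + 1) = b := by simp [wxb, Nat.add_mod]
        rw [hiaeq, hx, show 2 * n + 1 + 1 = 2 * (n + 1) by ring] at h
        simp only [Abkks, Set.mem_union, Set.mem_insert_iff, Set.mem_singleton_iff,
          Prod.mk.injEq] at h
        rcases h with (⟨h1,h2,h3⟩|⟨h1,h2,h3⟩|⟨h1,h2,h3⟩|⟨h1,h2,h3⟩) |
          (⟨h1,h2,h3⟩|⟨h1,h2,h3⟩|⟨h1,h2,h3⟩|⟨h1,h2,h3⟩|⟨h1,h2,h3⟩|⟨h1,h2,h3⟩|⟨h1,h2,h3⟩|⟨h1,h2,h3⟩) <;>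
          first | exact h3 | exact absurd h3 hne | simp_all
      refine ⟨heven, ?_⟩
      have h := hsub (hstep (2 * (n + 1)))
      have hx : wxb (2 * (n + 1)) = x := by simp [wxb, Nat.mul_mod_right]
      rw [heven, hx] at h
      have hne : ρ (2 * (n + 1) + 1) ≠ ib := by
        intro he
        exact hib (by rw [← heven, ← hx, ← he]; exact hstep (2 * (n + 1)))
      simp only [Abkks, Set.mem_union, Set.mem_insert_iff, Set.mem_singleton_iff,
        Prod.mk.injEq] at h
      rcases h with (⟨h1,h2,h3⟩|⟨h1,h2,h3⟩|⟨h1,h2,h3⟩|⟨h1,h2,h3⟩) |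
          (⟨h1,h2,h3⟩|⟨h1,h2,h3⟩|⟨h1,h2,h3⟩|⟨h1,h2,h3⟩|⟨h1,h2,h3⟩|⟨h1,h2,h3⟩|⟨h1,h2,h3⟩|⟨h1,h2,h3⟩) <;>
          first | exact h3 | exact absurd h3 hne | simp_all
  intro hacc
  obtain ⟨i, _, hsig⟩ := hacc 0
  have hsig' : (ρ i, wxb i, ρ (i + 1)) ∈ Abkks.sig := hsig.1
  have hpar : i % 2 = 0 ∨ i % 2 = 1 := by omega
  rcases hpar with hp | hp
  · obtain ⟨k, hk⟩ : ∃ k, i = 2 * k := ⟨i / 2, by omega⟩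
    have hI : ρ i = I := by rw [hk]; exact (key k).1
    rw [hI] at hsig'
    simp only [Abkks, Set.mem_insert_iff, Set.mem_singleton_iff, Prod.mk.injEq] at hsig'
    rcases hsig' with ⟨h1,_⟩|⟨h1,_⟩|⟨h1,_⟩|⟨h1,_⟩ <;> simp_all
  · obtain ⟨k, hk⟩ : ∃ k, i = 2 * k + 1 := ⟨i / 2, by omega⟩
    have hiaeq : ρ i = ia := by rw [hk]; exact (key k).2
    have hx : wxb i = b := by simp [wxb, hk, Nat.add_mod]
    rw [hiaeq, hx] at hsig'
    simp only [Abkks, Set.mem_insert_iff, Set.mem_singleton_iff, Prod.mk.injEq] at hsig'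
    rcases hsig' with ⟨h1,h2,_⟩|⟨h1,h2,_⟩|⟨h1,h2,_⟩|⟨h1,h2,_⟩ <;>
      simp_all


/-- `A_BKKS` is not determinisable by pruning: no deterministic
Büchi automaton obtained from `A_BKKS` by removing transitions (keeping the same
states and initial state, a transition set `Δ' ⊆ Δ`, and significant transitions
`F ∩ Δ'`) recognises `L(A_BKKS)`. -/
theorem Abkks_not_determinisable_by_pruning :
    ¬ ∃ (Δ' : Set (BSt × XAB × BSt)) (h : Δ' ⊆ Abkks.trans),
      (BuchiAutomaton.mk Abkks.init Δ' (Abkks.sig ∩ Δ') Set.inter_subset_right).Deterministic ∧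
      (BuchiAutomaton.mk Abkks.init Δ' (Abkks.sig ∩ Δ') Set.inter_subset_right).Lang =
        Abkks.Lang := by
  rintro ⟨Δ', hsub, hdet, hlang⟩
  by_cases hia : (BSt.I, XAB.x, BSt.ia) ∈ Δ'
  · by_cases hib : (BSt.I, XAB.x, BSt.ib) ∈ Δ'
    · exact absurd (hdet BSt.I XAB.x BSt.ia BSt.ib hia hib) (by simp)
    · have hmem : wxb ∈ (BuchiAutomaton.mk Abkks.init Δ' (Abkks.sig ∩ Δ')
          Set.inter_subset_right).Lang := hlang ▸ wxb_mem
      obtain ⟨ρ, hrun, hacc⟩ := hmem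
      exact not_acc_b hsub hib hrun hacc
  · have hmem : wxa ∈ (BuchiAutomaton.mk Abkks.init Δ' (Abkks.sig ∩ Δ')
        Set.inter_subset_right).Lang := hlang ▸ wxa_mem
    obtain ⟨ρ, hrun, hacc⟩ := hmem
    exact not_acc_a hsub hia hrun hacc
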